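/- Fix a real ρ with 0 < ρ < 1. For each integer n ≥ 2, let G_n(1) be the single-node freshness in the n-node fully connected network (defined by G_n(n) = 1/(1+ρ) and G_n(j) = (j/n + (j(n−j)/(n−1))·G_n(j+1)) / (ρ + j/n + j(n−j)/(n−1)) for j = 1, …, n−1), and let F_n(1) be the single-node freshness in the n-node ring network (defined by F_n(n) = 1/(1+ρ) and F_n(j) = (j/n + F_n(j+1)) / (1 + ρ + j/n) for j = 1, …, n−1). Then G_n(1)/F_n(1) → ∞ as n → ∞; i.e., for 0 < ρ < 1 the fully connected network is asymptotically fresher than the ring network. -/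

import Mathlib

/-- Harmonic sum bound: `∑_{i=1}^N 1/i ≤ 1 + log N` for `N ≥ 1`. -/
lemma gossip_harmonic_le_one_add_log (N : ℕ) (hN : 1 ≤ N) :
    ∑ i ∈ Finset.Icc 1 N, (1:ℝ)/i ≤ 1 + Real.log N := by
  induction N, hN using Nat.le_induction with
  | base => simp
  | succ N hN ih =>
    rw [Finset.sum_Icc_succ_top (by omega : 1 ≤ N + 1)]
    have hN0 : (0:ℝ) < N := by exact_mod_cast hN
    have hN1 : (0:ℝ) < (N:ℝ) + 1 := by linarith
    have hlog : Real.log ((N:ℝ)/((N:ℝ)+1)) ≤ (N:ℝ)/((N:ℝ)+1) - 1 :=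
      Real.log_le_sub_one_of_pos (by positivity)
    have hdiv : Real.log ((N:ℝ)/((N:ℝ)+1)) = Real.log N - Real.log ((N:ℝ)+1) :=
      Real.log_div (ne_of_gt hN0) (ne_of_gt hN1)
    have he : (N:ℝ)/((N:ℝ)+1) - 1 = -(1/((N:ℝ)+1)) := by field_simp; ring
    have key : (1:ℝ)/((N:ℝ)+1) ≤ Real.log ((N:ℝ)+1) - Real.log N := by
      rw [hdiv, he] at hlog; linarith
    push_cast
    linarith

/-- For `0 < ρ < 1`, the fully connected network is asymptotically fresher
than the ring network: `G n 1 / F n 1 → ∞` as `n → ∞`, where `G n ·` solves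
the fully connected recursion and `F n ·` solves the ring recursion. -/
theorem fully_connected_asymptotically_fresher_than_ring
    (ρ : ℝ) (hρ0 : 0 < ρ) (hρ1 : ρ < 1)
    (G : ℕ → ℕ → ℝ)
    (hGn : ∀ n : ℕ, 2 ≤ n → G n n = 1 / (1 + ρ))
    (hGrec : ∀ n : ℕ, 2 ≤ n → ∀ j : ℕ, 1 ≤ j → j ≤ n - 1 →
      G n j = ((j : ℝ) / n + ((j : ℝ) * ((n : ℝ) - j) / ((n : ℝ) - 1)) * G n (j + 1)) /
        (ρ + (j : ℝ) / n + (j : ℝ) * ((n : ℝ) - j) / ((n : ℝ) - 1)))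
    (F : ℕ → ℕ → ℝ)
    (hFn : ∀ n : ℕ, 2 ≤ n → F n n = 1 / (1 + ρ))
    (hFrec : ∀ n : ℕ, 2 ≤ n → ∀ j : ℕ, 1 ≤ j → j ≤ n - 1 →
      F n j = ((j : ℝ) / n + F n (j + 1)) / (1 + ρ + (j : ℝ) / n)) :
    Filter.Tendsto (fun n : ℕ => G n 1 / F n 1) Filter.atTop Filter.atTop := by
  obtain ⟨ε, hεdef⟩ : ∃ ε : ℝ, ε = (1 - ρ) / 4 := ⟨_, rfl⟩
  have hε0 : 0 < ε := by rw [hεdef]; linarith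
  have hε1 : ε < 1 := by rw [hεdef]; linarith
  have hρε : 0 < ρ + ε := by linarith
  have h1ε : 0 < 1 - ε := by linarith
  obtain ⟨s, hsdef⟩ : ∃ s : ℝ, s = (ρ + ε) / (1 - ε) := ⟨_, rfl⟩
  have hs0 : 0 < s := hsdef ▸ div_pos hρε h1ε
  have hs1 : s < 1 := by
    rw [hsdef, div_lt_one h1ε, hεdef]; linarith
  have hsε : ρ + ε = s * (1 - ε) := by
    rw [hsdef]; field_simp
  obtain ⟨d, hddef⟩ : ∃ d : ℝ, d = ε / (ρ + ε) := ⟨_, rfl⟩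
  have hd0 : 0 < d := hddef ▸ div_pos hε0 hρε
  have hdε : d * (ρ + ε) = ε := by rw [hddef]; field_simp
  have hd1 : d ≤ 1 / (1 + ρ) := by
    rw [hddef, div_le_div_iff₀ hρε (by linarith : (0:ℝ) < 1 + ρ)]
    have : ρ * ε ≤ ρ * 1 := mul_le_mul_of_nonneg_left hε1.le hρ0.le
    linarith
  have hdlt1 : d < 1 := by
    have : (1:ℝ) / (1 + ρ) < 1 := by
      rw [div_lt_one (by linarith : (0:ℝ) < 1 + ρ)]; linarith
    linarith
  obtain ⟨C, hCdef⟩ : ∃ C : ℝ, C = 1/ρ + 1/ρ^2 := ⟨_, rfl⟩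
  have hC0 : 0 < C := by rw [hCdef]; positivity
  -- main per-n bound
  have main : ∀ n : ℕ, 2 ≤ n →
      d * Real.exp (-s) * (n:ℝ) ^ (-s) ≤ G n 1 ∧ 0 < F n 1 ∧ F n 1 ≤ C / n := by
    intro n hn
    have hn0 : (0:ℝ) < n := by positivity
    have hn2 : (2:ℝ) ≤ n := by exact_mod_cast hn
    have hn1 : (1:ℝ) ≤ (n:ℝ) - 1 := by linarith
    -- ===== F part =====
    have hFb : ∀ k : ℕ, ∀ j : ℕ, 1 ≤ j → j + k = n →
        0 < F n j ∧ F n j ≤ ((j:ℝ)/ρ + 1/ρ^2)/n := by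
      intro k
      induction k with
      | zero =>
        intro j hj1 hjn
        have hje : j = n := by omega
        rw [hje, hFn n hn]
        constructor
        · positivity
        · rw [div_le_div_iff₀ (by linarith : (0:ℝ) < 1 + ρ) hn0]
          have e : ((n:ℝ)/ρ + 1/ρ^2) * (1+ρ) = (n:ℝ)/ρ + (n:ℝ)*(ρ*(1/ρ)) + 1/ρ^2 + (ρ*(1/ρ))*(1/ρ) := by
            ring
          have e4 : ρ * (1/ρ) = 1 := by field_simp
          have h1 : (0:ℝ) ≤ (n:ℝ)/ρ := by positivity
          have h2 : (0:ℝ) ≤ 1/ρ^2 := by positivity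
          have h3 : (0:ℝ) ≤ 1/ρ := by positivity
          rw [e, e4]
          linarith
      | succ k ih =>
        intro j hj1 hjn
        have hjn' : j ≤ n - 1 := by omega
        have hrec := hFrec n hn j hj1 hjn'
        obtain ⟨hp, hb⟩ := ih (j+1) (by omega) (by omega)
        have hjR : (0:ℝ) < j := by exact_mod_cast hj1
        have hden : (0:ℝ) < 1 + ρ + (j:ℝ)/n := by positivity
        have hb' : F n (j+1) * n ≤ ((j:ℝ)+1)/ρ + 1/ρ^2 := by
          rw [← le_div_iff₀ hn0]
          convert hb using 2
          · rfl
          · push_cast; ring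
        constructor
        · rw [hrec]
          apply div_pos _ hden
          have : (0:ℝ) ≤ (j:ℝ)/n := by positivity
          linarith
        · rw [hrec, div_le_div_iff₀ hden hn0]
          have e1 : (j:ℝ)/n * n = j := div_mul_cancel₀ _ (ne_of_gt hn0)
          have e2 : ((j:ℝ)/n + F n (j+1)) * n = (j:ℝ) + F n (j+1) * n := by
            rw [add_mul, e1]
          have e3 : ((j:ℝ)/ρ + 1/ρ^2) * (1 + ρ + (j:ℝ)/n)
              = ((j:ℝ)/ρ + 1/ρ^2) * (1 + ρ) + ((j:ℝ)/ρ + 1/ρ^2) * ((j:ℝ)/n) := by ring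
          have key : (j:ℝ) + (((j:ℝ)+1)/ρ + 1/ρ^2) = ((j:ℝ)/ρ + 1/ρ^2) * (1 + ρ) := by
            field_simp; ring
          have h2 : (0:ℝ) ≤ ((j:ℝ)/ρ + 1/ρ^2) * ((j:ℝ)/n) := by positivity
          linarith [e2, e3, key, hb', h2]
    obtain ⟨hF0, hFub⟩ := hFb (n-1) 1 le_rfl (by omega)
    have hFub' : F n 1 ≤ C / n := by
      refine le_trans hFub (le_of_eq ?_)
      rw [hCdef]; push_cast; ring
    -- ===== G part =====
    obtain ⟨m, hmdef⟩ : ∃ m : ℕ, m = ⌈ε * (n:ℝ)⌉₊ := ⟨_, rfl⟩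
    have hm1 : 1 ≤ m := by
      rw [hmdef]
      exact Nat.one_le_ceil_iff.mpr (by positivity)
    have hmn : m ≤ n := by
      rw [hmdef]
      refine Nat.ceil_le.mpr ?_
      have : 0 < (1 - ε) * (n:ℝ) := mul_pos h1ε hn0
      linarith
    -- stage A : for m ≤ j ≤ n, d ≤ G n j
    have hA : ∀ k : ℕ, ∀ j : ℕ, m ≤ j → j + k = n → d ≤ G n j := by
      intro k
      induction k with
      | zero =>
        intro j hj hjn
        have hje : j = n := by omega
        rw [hje, hGn n hn]; exact hd1
      | succ k ih =>
        intro j hj hjn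
        have hj1 : 1 ≤ j := le_trans hm1 hj
        have hjn' : j ≤ n - 1 := by omega
        have hrec := hGrec n hn j hj1 hjn'
        have hg := ih (j+1) (by omega) (by omega)
        have hjR : (1:ℝ) ≤ j := by exact_mod_cast hj1
        have hjnR : (j:ℝ) < n := by exact_mod_cast (by omega : j < n)
        have hεj : ε ≤ (j:ℝ)/n := by
          rw [le_div_iff₀ hn0]
          have h1 : ε * n ≤ m := hmdef ▸ Nat.le_ceil _
          have h2 : (m:ℝ) ≤ j := by exact_mod_cast hj
          linarith
        have hb0 : (0:ℝ) < (j:ℝ) * ((n:ℝ) - j) / ((n:ℝ) - 1) := by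
          apply div_pos
          · exact mul_pos (by linarith) (by linarith)
          · linarith
        have hden : (0:ℝ) < ρ + (j:ℝ)/n + (j:ℝ) * ((n:ℝ) - j) / ((n:ℝ) - 1) := by
          have : (0:ℝ) ≤ (j:ℝ)/n := by positivity
          linarith
        rw [hrec, le_div_iff₀ hden]
        have hmul : ((j:ℝ) * ((n:ℝ) - j) / ((n:ℝ) - 1)) * d
            ≤ ((j:ℝ) * ((n:ℝ) - j) / ((n:ℝ) - 1)) * G n (j+1) :=
          mul_le_mul_of_nonneg_left hg hb0.le
        have t : (1 - d) * ε ≤ (1 - d) * ((j:ℝ)/n) :=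
          mul_le_mul_of_nonneg_left hεj (by linarith)
        have k1 : d * (ρ + (j:ℝ)/n) ≤ (j:ℝ)/n := by linarith [t, hdε]
        linarith [hmul, k1]
    -- stage B : for 1 ≤ j ≤ m, d * exp(-s * ∑_{i=j}^{m-1} 1/i) ≤ G n j
    have hB : ∀ k : ℕ, ∀ j : ℕ, 1 ≤ j → j + k = m →
        d * Real.exp (-s * ∑ i ∈ Finset.Icc j (m-1), (1:ℝ)/i) ≤ G n j := by
      intro k
      induction k with
      | zero =>
        intro j hj1 hjm
        have hje : j = m := by omega
        rw [hje, Finset.Icc_eq_empty (by omega : ¬ m ≤ m - 1)]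
        simpa using hA (n - m) m le_rfl (by omega)
      | succ k ih =>
        intro j hj1 hjm
        have hjm1 : j ≤ m - 1 := by omega
        have hjn' : j ≤ n - 1 := by omega
        have hrec := hGrec n hn j hj1 hjn'
        have hg := ih (j+1) (by omega) (by omega)
        have hjR : (0:ℝ) < j := by exact_mod_cast hj1
        have hjnR : (j:ℝ) < n := by exact_mod_cast (by omega : j < n)
        have hjε : (j:ℝ) < ε * n := by
          have h1 : j < m := by omega
          rw [hmdef] at h1
          exact_mod_cast Nat.lt_ceil.mp h1
        have haε : (j:ℝ)/n ≤ ε := by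
          rw [div_le_iff₀ hn0]; linarith
        have hbge : (j:ℝ) * (1 - ε) ≤ (j:ℝ) * ((n:ℝ) - j) / ((n:ℝ) - 1) := by
          rw [le_div_iff₀ (by linarith : (0:ℝ) < (n:ℝ) - 1)]
          have w1 : (j:ℝ) * (j:ℝ) < (j:ℝ) * (ε * n) := mul_lt_mul_of_pos_left hjε hjR
          have w2 : (0:ℝ) ≤ (j:ℝ) * (1 - ε) := mul_nonneg hjR.le (by linarith)
          linarith
        have hb0 : (0:ℝ) < (j:ℝ) * ((n:ℝ) - j) / ((n:ℝ) - 1) := by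
          apply div_pos
          · exact mul_pos (by linarith) (by linarith)
          · linarith
        have hden : (0:ℝ) < ρ + (j:ℝ)/n + (j:ℝ) * ((n:ℝ) - j) / ((n:ℝ) - 1) := by
          have : (0:ℝ) ≤ (j:ℝ)/n := by positivity
          linarith
        -- exp(-(s/j)) ≤ j/(j+s)
        have hE : Real.exp (-(s/(j:ℝ))) ≤ (j:ℝ)/((j:ℝ)+s) := by
          rw [Real.exp_neg]
          have h1 : 1 + s/(j:ℝ) ≤ Real.exp (s/(j:ℝ)) := by
            have := Real.add_one_le_exp (s/(j:ℝ)); linarith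
          have h2 : (0:ℝ) < 1 + s/(j:ℝ) := by positivity
          have h3 := inv_anti₀ h2 h1
          have e : ((1:ℝ) + s/(j:ℝ))⁻¹ = (j:ℝ)/((j:ℝ)+s) := by
            rw [inv_eq_one_div]; field_simp
          linarith [e ▸ h3]
        -- j/(j+s) * (ρ+a+b) ≤ b
        have hfrac : (j:ℝ)/((j:ℝ)+s) * (ρ + (j:ℝ)/n + (j:ℝ) * ((n:ℝ) - j) / ((n:ℝ) - 1))
            ≤ (j:ℝ) * ((n:ℝ) - j) / ((n:ℝ) - 1) := by
          rw [div_mul_eq_mul_div, div_le_iff₀ (by positivity : (0:ℝ) < (j:ℝ)+s)]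
          have h5 : (j:ℝ) * ((j:ℝ)/n) ≤ (j:ℝ) * ε := mul_le_mul_of_nonneg_left haε hjR.le
          have h6 : s * ((j:ℝ) * (1-ε)) ≤ s * ((j:ℝ) * ((n:ℝ) - j) / ((n:ℝ) - 1)) :=
            mul_le_mul_of_nonneg_left hbge hs0.le
          have h7 : (j:ℝ) * (ρ + ε) = (j:ℝ) * (s * (1-ε)) := by rw [hsε]
          linarith [h5, h6, h7]
        have hexp : Real.exp (-(s/(j:ℝ))) *
            (ρ + (j:ℝ)/n + (j:ℝ) * ((n:ℝ) - j) / ((n:ℝ) - 1))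
            ≤ (j:ℝ) * ((n:ℝ) - j) / ((n:ℝ) - 1) :=
          le_trans (mul_le_mul_of_nonneg_right hE hden.le) hfrac
        have hsplit : ∑ i ∈ Finset.Icc j (m-1), (1:ℝ)/i
            = 1/(j:ℝ) + ∑ i ∈ Finset.Icc (j+1) (m-1), (1:ℝ)/i := by
          rw [Finset.Icc_eq_cons_Ioc hjm1, Finset.sum_cons, ← Finset.Icc_add_one_left_eq_Ioc]
        rw [hrec, hsplit, le_div_iff₀ hden]
        have e1 : -s * (1/(j:ℝ) + ∑ i ∈ Finset.Icc (j+1) (m-1), (1:ℝ)/i)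
            = (-(s/(j:ℝ))) + (-s * ∑ i ∈ Finset.Icc (j+1) (m-1), (1:ℝ)/i) := by
          field_simp; ring
        rw [e1, Real.exp_add]
        obtain ⟨S, hSdef⟩ : ∃ S : ℝ, S = Real.exp (-s * ∑ i ∈ Finset.Icc (j+1) (m-1), (1:ℝ)/i) := ⟨_, rfl⟩
        rw [← hSdef]
        rw [← hSdef] at hg
        have hS0 : 0 < S := hSdef ▸ Real.exp_pos _
        calc d * (Real.exp (-(s/(j:ℝ))) * S) *
              (ρ + (j:ℝ)/n + (j:ℝ) * ((n:ℝ) - j) / ((n:ℝ) - 1))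
            = (d * S) * (Real.exp (-(s/(j:ℝ))) *
              (ρ + (j:ℝ)/n + (j:ℝ) * ((n:ℝ) - j) / ((n:ℝ) - 1))) := by ring
          _ ≤ (d * S) * ((j:ℝ) * ((n:ℝ) - j) / ((n:ℝ) - 1)) := by
              apply mul_le_mul_of_nonneg_left hexp (by positivity)
          _ = ((j:ℝ) * ((n:ℝ) - j) / ((n:ℝ) - 1)) * (d * S) := by ring
          _ ≤ ((j:ℝ) * ((n:ℝ) - j) / ((n:ℝ) - 1)) * G n (j+1) :=
              mul_le_mul_of_nonneg_left hg hb0.le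
          _ ≤ (j:ℝ)/n + ((j:ℝ) * ((n:ℝ) - j) / ((n:ℝ) - 1)) * G n (j+1) := by
              have : (0:ℝ) ≤ (j:ℝ)/n := by positivity
              linarith
    -- combine stage B with harmonic bound
    have hG1 := hB (m-1) 1 le_rfl (by omega)
    have hHle : ∑ i ∈ Finset.Icc 1 (m-1), (1:ℝ)/i ≤ 1 + Real.log n := by
      have hsub : ∑ i ∈ Finset.Icc 1 (m-1), (1:ℝ)/i ≤ ∑ i ∈ Finset.Icc 1 n, (1:ℝ)/i := by
        apply Finset.sum_le_sum_of_subset_of_nonneg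
        · exact Finset.Icc_subset_Icc le_rfl (by omega)
        · intro i _ _; positivity
      exact le_trans hsub (gossip_harmonic_le_one_add_log n (by omega))
    have hGlb : d * Real.exp (-s) * (n:ℝ) ^ (-s) ≤ G n 1 := by
      refine le_trans ?_ hG1
      have e2 : (n:ℝ) ^ (-s) = Real.exp (Real.log n * (-s)) := Real.rpow_def_of_pos hn0 _
      rw [e2, mul_assoc, ← Real.exp_add]
      apply mul_le_mul_of_nonneg_left _ hd0.le
      apply Real.exp_le_exp.mpr
      linarith [mul_le_mul_of_nonneg_left hHle hs0.le]
    exact ⟨hGlb, hF0, hFub'⟩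
  -- ===== assemble the limit =====
  have hK0 : 0 < d * Real.exp (-s) / C := by positivity
  have hT : Filter.Tendsto (fun n : ℕ => (d * Real.exp (-s) / C) * (n:ℝ) ^ (1 - s))
      Filter.atTop Filter.atTop := by
    apply Filter.Tendsto.const_mul_atTop hK0
    exact (tendsto_rpow_atTop (by linarith : (0:ℝ) < 1 - s)).comp
      tendsto_natCast_atTop_atTop
  refine Filter.tendsto_atTop_mono' _ ?_ hT
  filter_upwards [Filter.eventually_ge_atTop 2] with n hn
  obtain ⟨hG1, hF0, hF1⟩ := main n hn
  have hn0 : (0:ℝ) < n := by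
    have : (2:ℝ) ≤ n := by exact_mod_cast hn
    linarith
  have hG0 : (0:ℝ) ≤ G n 1 := le_trans (by positivity) hG1
  have h1 : (d * Real.exp (-s) * (n:ℝ) ^ (-s)) / (C / n) ≤ G n 1 / F n 1 :=
    div_le_div₀ hG0 hG1 hF0 hF1
  have e : (d * Real.exp (-s) / C) * (n:ℝ) ^ (1 - s)
      = (d * Real.exp (-s) * (n:ℝ) ^ (-s)) / (C / n) := by
    rw [show (1:ℝ) - s = 1 + (-s) by ring, Real.rpow_add hn0, Real.rpow_one]
    have hns : (0:ℝ) < (n:ℝ) ^ (-s) := Real.rpow_pos_of_pos hn0 _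
    field_simp
  rw [e]
  exact h1
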